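/- arXiv:1712.09034 — 5 statements merged into one kernel-verified Lean document; each statement's English description precedes it below -/
import Mathlib

section
/- If H and H' are ordered graphs each containing a monotone path on three vertices, then no ordered forest F satisfies F → (H, H'); that is, for every ordered forest F there exists a red/blue coloring of E(F) with no red order-preserving copy of H and no blue order-preserving copy of H'. -/
/-- Any finite acyclic graph admits a proper 2-coloring. -/
lemma exists_bipartition {V : Type*} [Fintype V] :
    ∀ (k : ℕ) (G : SimpleGraph V), G.edgeSet.ncard ≤ k → G.IsAcyclic →
      ∃ b : V → Bool, ∀ u v, G.Adj u v → b u ≠ b v := by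
  classical
  intro k
  induction k with
  | zero =>
    intro G hcard _
    have hfin : G.edgeSet.Finite := Set.toFinite _
    have : G.edgeSet = ∅ := by
      have := Nat.le_zero.mp hcard
      exact (Set.ncard_eq_zero hfin).mp this
    refine ⟨fun _ => true, fun u v huv => ?_⟩
    exact absurd (by rw [this] at *; exact (G.mem_edgeSet.mpr huv)) (by simp [this])
  | succ k ih =>
    intro G hcard hG
    by_cases hE : ∃ u v, G.Adj u v
    · obtain ⟨p, q, hpq⟩ := hE
      set G' := G.deleteEdges {s(p, q)} with hG'def
      have hle : G' ≤ G := G.deleteEdges_le _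
      have hG'acyclic : G'.IsAcyclic := by
        intro x c hc
        exact hG (c.mapLe hle) (hc.mapLe hle)
      have hedge : G'.edgeSet = G.edgeSet \ {s(p, q)} := G.edgeSet_deleteEdges _
      have hmem : s(p, q) ∈ G.edgeSet := G.mem_edgeSet.mpr hpq
      have hlt : G'.edgeSet.ncard < G.edgeSet.ncard := by
        rw [hedge]
        exact Set.ncard_diff_singleton_lt_of_mem hmem (Set.toFinite _)
      obtain ⟨b', hb'⟩ := ih G' (by omega) hG'acyclic
      have hbridge : G.IsBridge s(p, q) :=
        (SimpleGraph.isAcyclic_iff_forall_adj_isBridge.mp hG) hpq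
      have hnreach : ¬ G'.Reachable p q := by
        have : ¬ (G.deleteEdges {s(p, q)}).Reachable p q := hbridge
        simpa [hG'def, SimpleGraph.deleteEdges] using this
      -- flip colors on the component of v if needed
      set b : V → Bool := fun x =>
        if G'.Reachable q x then (if b' q = b' p then !(b' x) else b' x) else b' x with hbdef
      refine ⟨b, fun x y hxy => ?_⟩
      by_cases he : s(x, y) = s(p, q)
      · rw [Sym2.eq_iff] at he
        have key : b p ≠ b q := by
          have h1 : b p = b' p := by
            simp only [hbdef]
            rw [if_neg (fun h => hnreach h.symm)]
          have h2 : b q = if b' q = b' p then !(b' q) else b' q := by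
            simp only [hbdef]
            rw [if_pos (SimpleGraph.Reachable.refl q)]
          rw [h1, h2]
          by_cases hc : b' q = b' p <;> simp [hc]
          · intro h; exact hc h.symm
        rcases he with ⟨rfl, rfl⟩ | ⟨rfl, rfl⟩
        · exact key
        · exact fun h => key h.symm
      · have hxy' : G'.Adj x y := by
          rw [hG'def, SimpleGraph.deleteEdges_adj]
          exact ⟨hxy, by simpa using he⟩
        have hreach : G'.Reachable q x ↔ G'.Reachable q y :=
          ⟨fun h => h.trans hxy'.reachable, fun h => h.trans hxy'.symm.reachable⟩
        have hne := hb' x y hxy'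
        simp only [hbdef]
        by_cases hr : G'.Reachable q x
        · rw [if_pos hr, if_pos (hreach.mp hr)]
          by_cases hc : b' q = b' p <;> simp [hc, hne]
        · rw [if_neg hr, if_neg (fun h => hr (hreach.mpr h))]
          exact hne
    · push_neg at hE
      exact ⟨fun _ => true, fun u v huv => absurd huv (hE u v)⟩

/-- An order-preserving copy of the ordered graph `H` in the ordered graph `F`. -/
def OrdCopy {m n : ℕ} (H : SimpleGraph (Fin m)) (F : SimpleGraph (Fin n))
    (f : Fin m → Fin n) : Prop :=
  StrictMono f ∧ ∀ u v, H.Adj u v → F.Adj (f u) (f v)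

/-- `F → (H, H')`: every red/blue coloring (`true` = red, `false` = blue) of the edges of `F`
contains a red ordered copy of `H` or a blue ordered copy of `H'`. -/
def OrdArrows {m m' n : ℕ} (F : SimpleGraph (Fin n))
    (H : SimpleGraph (Fin m)) (H' : SimpleGraph (Fin m')) : Prop :=
  ∀ c : Sym2 (Fin n) → Bool,
    (∃ f, OrdCopy H F f ∧ ∀ u v, H.Adj u v → c s(f u, f v) = true) ∨
    (∃ g, OrdCopy H' F g ∧ ∀ u v, H'.Adj u v → c s(g u, g v) = false)

/-- If `H` and `H'` each contain a monotone path on three vertices, then no ordered forest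
is an ordered Ramsey graph of `(H, H')`. -/
theorem stmt3 {m m' : ℕ} (H : SimpleGraph (Fin m)) (H' : SimpleGraph (Fin m'))
    (hH : ∃ x y z : Fin m, x < y ∧ y < z ∧ H.Adj x y ∧ H.Adj y z)
    (hH' : ∃ x y z : Fin m', x < y ∧ y < z ∧ H'.Adj x y ∧ H'.Adj y z) :
    ∀ (n : ℕ) (F : SimpleGraph (Fin n)), F.IsAcyclic → ¬ OrdArrows F H H' := by
  intro n F hF harrows
  obtain ⟨b, hb⟩ := exists_bipartition F.edgeSet.ncard F le_rfl hF
  -- color edge {u,v} with u < v by the color of v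
  set c : Sym2 (Fin n) → Bool :=
    Sym2.lift ⟨fun u v => b (max u v), fun u v => congrArg b (max_comm u v)⟩ with hcdef
  have hc : ∀ u v : Fin n, u < v → c s(u, v) = b v := by
    intro u v huv
    simp [hcdef, max_eq_right huv.le]
  -- key: no monochromatic monotone P3 at all
  have key : ∀ (x y z : Fin n), x < y → y < z → F.Adj x y → F.Adj y z →
      c s(x, y) ≠ c s(y, z) := by
    intro x y z hxy hyz ha1 ha2
    rw [hc x y hxy, hc y z hyz]
    exact hb y z ha2
  rcases harrows c with ⟨f, ⟨hmono, hadj⟩, hred⟩ | ⟨g, ⟨hmono, hadj⟩, hblue⟩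
  · obtain ⟨x, y, z, hxy, hyz, h1, h2⟩ := hH
    exact key (f x) (f y) (f z) (hmono hxy) (hmono hyz) (hadj _ _ h1) (hadj _ _ h2)
      (by rw [hred _ _ h1, hred _ _ h2])
  · obtain ⟨x, y, z, hxy, hyz, h1, h2⟩ := hH'
    exact key (g x) (g y) (g z) (hmono hxy) (hmono hyz) (hadj _ _ h1) (hadj _ _ h2)
      (by rw [hblue _ _ h1, hblue _ _ h2])
end

section
/- If one of two ordered graphs H, H' contains a vertex with at least two neighbors strictly to its right and the other contains a vertex with at least two neighbors strictly to its left, then no ordered pseudoforest is an ordered Ramsey graph of (H, H'). -/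
/-- A pseudoforest: every subgraph `G'` satisfies `|E(G')| ≤ |V(G')|`. -/
def IsPseudoforest {n : ℕ} (F : SimpleGraph (Fin n)) : Prop :=
  ∀ (s : Finset (Fin n)) (E : Set (Sym2 (Fin n))),
    E ⊆ {e ∈ F.edgeSet | ∀ v ∈ e, v ∈ s} → E.ncard ≤ s.card

/-- Orientation lemma: a pseudoforest admits an injective choice of an endpoint
for each edge (out-degree ≤ 1 orientation). -/
lemma pseudoforest_orient {n : ℕ} (F : SimpleGraph (Fin n)) (hpf :
    ∀ (s : Finset (Fin n)) (E : Set (Sym2 (Fin n))),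
      E ⊆ {e ∈ F.edgeSet | ∀ v ∈ e, v ∈ s} → E.ncard ≤ s.card) :
    ∃ f' : Sym2 (Fin n) → Fin n,
      (∀ e ∈ F.edgeSet, f' e ∈ e) ∧
      ∀ e₁ ∈ F.edgeSet, ∀ e₂ ∈ F.edgeSet, f' e₁ = f' e₂ → e₁ = e₂ := by
  classical
  set t : F.edgeSet → Finset (Fin n) :=
    fun e => Finset.univ.filter (· ∈ (e : Sym2 (Fin n))) with ht
  have hall : ∀ s : Finset F.edgeSet, s.card ≤ (s.biUnion t).card := by
    intro s
    have key := hpf (s.biUnion t) ((fun e : F.edgeSet => (e : Sym2 (Fin n))) '' ↑s)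
    have hsub : ((fun e : F.edgeSet => (e : Sym2 (Fin n))) '' ↑s) ⊆
        {e ∈ F.edgeSet | ∀ v ∈ e, v ∈ (s.biUnion t)} := by
      rintro _ ⟨e, hes, rfl⟩
      refine ⟨e.2, fun v hv => ?_⟩
      exact Finset.mem_biUnion.mpr ⟨e, hes, by simp [ht, hv]⟩
    have hcard : ((fun e : F.edgeSet => (e : Sym2 (Fin n))) '' ↑s).ncard = s.card := by
      rw [Set.ncard_image_of_injective _ Subtype.val_injective, Set.ncard_coe_finset]
    rw [hcard] at key
    exact key hsub
  obtain ⟨f, hfinj, hf⟩ := (Finset.all_card_le_biUnion_card_iff_exists_injective t).mp hall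
  refine ⟨fun e => if h : e ∈ F.edgeSet then f ⟨e, h⟩ else (Quot.out e).1, ?_, ?_⟩
  · intro e he
    have := hf ⟨e, he⟩
    simp only [ht, Finset.mem_filter] at this
    simpa [he] using this.2
  · intro e₁ h₁ e₂ h₂ heq
    simp only [h₁, h₂, dif_pos] at heq
    exact Subtype.ext_iff.mp (hfinj heq)

/-- If one of `H, H'` has a vertex with two neighbors strictly to its right and the other
has a vertex with two neighbors strictly to its left, no ordered pseudoforest is an
ordered Ramsey graph of `(H, H')`. -/
theorem stmt4 {m m' : ℕ} (H : SimpleGraph (Fin m)) (H' : SimpleGraph (Fin m'))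
    (h : ((∃ v a b : Fin m, a ≠ b ∧ v < a ∧ v < b ∧ H.Adj v a ∧ H.Adj v b) ∧
          (∃ v a b : Fin m', a ≠ b ∧ a < v ∧ b < v ∧ H'.Adj v a ∧ H'.Adj v b)) ∨
         ((∃ v a b : Fin m', a ≠ b ∧ v < a ∧ v < b ∧ H'.Adj v a ∧ H'.Adj v b) ∧
          (∃ v a b : Fin m, a ≠ b ∧ a < v ∧ b < v ∧ H.Adj v a ∧ H.Adj v b))) :
    ∀ (n : ℕ) (F : SimpleGraph (Fin n)), IsPseudoforest F → ¬ OrdArrows F H H' := by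
  classical
  intro n F hpf harr
  obtain ⟨f', hmem, hinj⟩ := pseudoforest_orient F hpf
  -- c e = true iff f' e is the minimum endpoint of e
  set c : Sym2 (Fin n) → Bool := fun e => decide (∀ x ∈ e, f' e ≤ x) with hc
  -- Key facts:
  have red_min : ∀ (x y : Fin n), x < y → F.Adj x y → c s(x, y) = true → f' s(x, y) = x := by
    intro x y hxy hadj hcol
    have hm : f' s(x, y) ∈ s(x, y) := hmem _ (F.mem_edgeSet.mpr hadj)
    have hle : ∀ z ∈ s(x, y), f' s(x, y) ≤ z := by
      simpa [hc] using hcol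
    rcases Sym2.mem_iff.mp hm with h1 | h1
    · exact h1
    · exfalso
      have hyx := hle x (Sym2.mem_mk_left x y)
      rw [h1] at hyx
      exact absurd hyx (not_le.mpr hxy)
  have blue_max : ∀ (x y : Fin n), x < y → F.Adj x y → c s(x, y) = false → f' s(x, y) = y := by
    intro x y hxy hadj hcol
    have hm : f' s(x, y) ∈ s(x, y) := hmem _ (F.mem_edgeSet.mpr hadj)
    rcases Sym2.mem_iff.mp hm with h1 | h1
    · exfalso
      have : ¬ (∀ z ∈ s(x, y), f' s(x, y) ≤ z) := by simpa [hc] using hcol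
      apply this
      intro z hz
      rcases Sym2.mem_iff.mp hz with rfl | rfl
      · exact le_of_eq h1
      · rw [h1]; exact hxy.le
    · exact h1
  -- no red copy of a graph with a right fork at v
  have noRedRight : ∀ {k : ℕ} (G : SimpleGraph (Fin k)) (v a b : Fin k), a ≠ b → v < a →
      v < b → G.Adj v a → G.Adj v b →
      ¬ ∃ g, OrdCopy G F g ∧ ∀ u w, G.Adj u w → c s(g u, g w) = true := by
    rintro k G v a b hab hva hvb hGa hGb ⟨g, ⟨hmono, hhom⟩, hcol⟩
    have hga : g v < g a := hmono hva
    have hgb : g v < g b := hmono hvb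
    have h1 : f' s(g v, g a) = g v := red_min _ _ hga (hhom _ _ hGa) (hcol _ _ hGa)
    have h2 : f' s(g v, g b) = g v := red_min _ _ hgb (hhom _ _ hGb) (hcol _ _ hGb)
    have heq : s(g v, g a) = s(g v, g b) :=
      hinj _ (F.mem_edgeSet.mpr (hhom _ _ hGa))
        _ (F.mem_edgeSet.mpr (hhom _ _ hGb)) (h1.trans h2.symm)
    rcases Sym2.eq_iff.mp heq with ⟨-, h3⟩ | ⟨h3, -⟩
    · exact hab (hmono.injective h3)
    · exact absurd h3 (ne_of_lt hgb)
  -- no blue copy of a graph with a left fork at v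
  have noBlueLeft : ∀ {k : ℕ} (G : SimpleGraph (Fin k)) (v a b : Fin k), a ≠ b → a < v →
      b < v → G.Adj v a → G.Adj v b →
      ¬ ∃ g, OrdCopy G F g ∧ ∀ u w, G.Adj u w → c s(g u, g w) = false := by
    rintro k G v a b hab hva hvb hGa hGb ⟨g, ⟨hmono, hhom⟩, hcol⟩
    have hga : g a < g v := hmono hva
    have hgb : g b < g v := hmono hvb
    have h1 : f' s(g a, g v) = g v := blue_max _ _ hga ((hhom _ _ hGa).symm) (by
      rw [Sym2.eq_swap]; exact hcol _ _ hGa)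
    have h2 : f' s(g b, g v) = g v := blue_max _ _ hgb ((hhom _ _ hGb).symm) (by
      rw [Sym2.eq_swap]; exact hcol _ _ hGb)
    have heq : s(g a, g v) = s(g b, g v) :=
      hinj _ (F.mem_edgeSet.mpr (hhom _ _ hGa).symm)
        _ (F.mem_edgeSet.mpr (hhom _ _ hGb).symm) (h1.trans h2.symm)
    rcases Sym2.eq_iff.mp heq with ⟨h3, -⟩ | ⟨h3, -⟩
    · exact hab (hmono.injective h3)
    · exact absurd h3 (ne_of_lt hga)
  rcases h with ⟨⟨v, a, b, hab, hva, hvb, hHa, hHb⟩, ⟨v', a', b', hab', hva', hvb', hHa', hHb'⟩⟩ |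
      ⟨⟨v', a', b', hab', hva', hvb', hHa', hHb'⟩, ⟨v, a, b, hab, hva, hvb, hHa, hHb⟩⟩
  · rcases harr c with hr | hb
    · exact noRedRight H v a b hab hva hvb hHa hHb hr
    · exact noBlueLeft H' v' a' b' hab' hva' hvb' hHa' hHb' hb
  · rcases harr (fun e => ! c e) with hr | hb
    · -- red copy of H, H has left fork; !c = true means c = false
      refine noBlueLeft H v a b hab hva hvb hHa hHb ?_
      obtain ⟨g, hg, hcol⟩ := hr
      exact ⟨g, hg, fun u w huw => by simpa using hcol u w huw⟩
    · -- blue copy of H', H' has right fork; !c = false means c = true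
      refine noRedRight H' v' a' b' hab' hva' hvb' hHa' hHb' ?_
      obtain ⟨g, hg, hcol⟩ := hb
      exact ⟨g, hg, fun u w huw => by simpa using hcol u w huw⟩
end

section
/- Let H be an ordered graph, σ the least n such that the complete ordered graph on n vertices arrows H in any 3-coloring (i.e., σ = r<(H,H,H)), ε = σ^(−σ)/4, δ = |E(H)|·σ^(−σ)/2, and n ≥ σ. If E1, E2 ⊆ E(K_n) each induce at most ε·n^{|V(H)|} order-preserving copies of H, then |E1 ∪ E2| ≤ (1 − δ)·C(n,2). -/
lemma aux_mul_sub {n s t : ℕ} (h : s ≤ n) : n * (s - t) ≤ s * (n - t) := by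
  rcases le_total t s with ht | ht
  · have h1 : t ≤ n := ht.trans h
    zify [ht, h1]
    nlinarith [Nat.mul_le_mul_right t h]
  · simp [Nat.sub_eq_zero_of_le ht]

lemma aux_desc (σ n : ℕ) (h : σ ≤ n) :
    ∀ t, n ^ t * σ.descFactorial t ≤ σ ^ t * n.descFactorial t := by
  intro t
  induction t with
  | zero => simp
  | succ t ih =>
    calc n ^ (t+1) * σ.descFactorial (t+1)
        = (n * (σ - t)) * (n ^ t * σ.descFactorial t) := by
          rw [Nat.descFactorial_succ, pow_succ]; ring
      _ ≤ (σ * (n - t)) * (σ ^ t * n.descFactorial t) :=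
          Nat.mul_le_mul (aux_mul_sub h) ih
      _ = σ ^ (t+1) * n.descFactorial (t+1) := by
          rw [Nat.descFactorial_succ, pow_succ]; ring

lemma aux_choose (t σ n : ℕ) (htσ : t ≤ σ) (hσn : σ ≤ n) :
    n ^ t * σ.choose t ≤ σ ^ σ * n.choose t := by
  have h1 := aux_desc σ n hσn t
  rw [Nat.descFactorial_eq_factorial_mul_choose, Nat.descFactorial_eq_factorial_mul_choose] at h1
  have h2 : σ ^ t ≤ σ ^ σ := by
    rcases Nat.eq_zero_or_pos σ with h | h
    · have : t = 0 := by omega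
      subst this; subst h; simp
    · exact Nat.pow_le_pow_right h htσ
  have h3 : Nat.factorial t * (n ^ t * σ.choose t) ≤ Nat.factorial t * (σ ^ σ * n.choose t) := by
    calc Nat.factorial t * (n ^ t * σ.choose t) = n ^ t * (Nat.factorial t * σ.choose t) := by ring
      _ ≤ σ ^ t * (Nat.factorial t * n.choose t) := h1
      _ ≤ σ ^ σ * (Nat.factorial t * n.choose t) := Nat.mul_le_mul_right _ h2
      _ = Nat.factorial t * (σ ^ σ * n.choose t) := by ring
  exact Nat.le_of_mul_le_mul_left h3 (Nat.factorial_pos t)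

lemma aux_choose2 (n : ℕ) : 2 * n.choose 2 ≤ n * n := by
  have h := Nat.descFactorial_eq_factorial_mul_choose n 2
  have h2 : n.descFactorial 2 = (n - 1) * n := by
    simp [Nat.descFactorial_succ, Nat.descFactorial]
  calc 2 * n.choose 2 = Nat.factorial 2 * n.choose 2 := by norm_num
    _ = (n - 1) * n := by rw [← h, h2]
    _ ≤ n * n := Nat.mul_le_mul_right _ (Nat.sub_le n 1)

lemma aux_sm_low (n k : ℕ) (hn : 0 < n) :
    n.choose k ≤ (Finset.univ.filter (fun g : Fin k → Fin n => StrictMono g)).card := by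
  classical
  haveI : NeZero n := ⟨hn.ne'⟩
  have key := Finset.card_le_card_of_injOn
    (s := Finset.powersetCard k (Finset.univ : Finset (Fin n)))
    (t := Finset.univ.filter (fun g : Fin k → Fin n => StrictMono g))
    (fun s => if h : s.card = k then ⇑(s.orderEmbOfFin h)
      else fun _ => Classical.arbitrary (Fin n))
    (by
      intro s hs
      have hcard : s.card = k := (Finset.mem_powersetCard.1 hs).2
      have : (fun s : Finset (Fin n) => if h : s.card = k then ⇑(s.orderEmbOfFin h)
          else fun _ => Classical.arbitrary (Fin n)) s = ⇑(s.orderEmbOfFin hcard) := dif_pos hcard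
      rw [this]
      exact Finset.mem_filter.2 ⟨Finset.mem_univ _, (s.orderEmbOfFin hcard).strictMono⟩)
    (by
      intro s1 h1 s2 h2 heq
      have hc1 : s1.card = k := (Finset.mem_powersetCard.1 h1).2
      have hc2 : s2.card = k := (Finset.mem_powersetCard.1 h2).2
      have heq' : ⇑(s1.orderEmbOfFin hc1) = ⇑(s2.orderEmbOfFin hc2) := by
        have e1 : (fun s : Finset (Fin n) => if h : s.card = k then ⇑(s.orderEmbOfFin h)
            else fun _ => Classical.arbitrary (Fin n)) s1 = ⇑(s1.orderEmbOfFin hc1) := dif_pos hc1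
        have e2 : (fun s : Finset (Fin n) => if h : s.card = k then ⇑(s.orderEmbOfFin h)
            else fun _ => Classical.arbitrary (Fin n)) s2 = ⇑(s2.orderEmbOfFin hc2) := dif_pos hc2
        rw [← e1, ← e2]; exact heq
      have : Set.range (s1.orderEmbOfFin hc1) = Set.range (s2.orderEmbOfFin hc2) := by
        rw [heq']
      rw [Finset.range_orderEmbOfFin, Finset.range_orderEmbOfFin] at this
      exact_mod_cast this)
  calc n.choose k = (Finset.powersetCard k (Finset.univ : Finset (Fin n))).card := by
        rw [Finset.card_powersetCard, Finset.card_univ, Fintype.card_fin]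
    _ ≤ _ := key

lemma aux_sm_fiber (n k : ℕ) (T : Finset (Fin n)) :
    ((Finset.univ.filter (fun g : Fin k → Fin n => StrictMono g)).filter
        (fun g => T ⊆ Finset.univ.image g)).card ≤ (n - T.card).choose (k - T.card) := by
  classical
  have key := Finset.card_le_card_of_injOn
    (s := (Finset.univ.filter (fun g : Fin k → Fin n => StrictMono g)).filter
        (fun g => T ⊆ Finset.univ.image g))
    (t := Finset.powersetCard (k - T.card) Tᶜ)
    (fun g : Fin k → Fin n => Finset.univ.image g \ T)
    (by
      intro g hg
      obtain ⟨hg1, hg2⟩ := Finset.mem_filter.1 hg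
      have hsm : StrictMono g := (Finset.mem_filter.1 hg1).2
      have himg : (Finset.univ.image g).card = k := by
        rw [Finset.card_image_of_injective _ hsm.injective, Finset.card_univ, Fintype.card_fin]
      refine Finset.mem_powersetCard.2 ⟨?_, ?_⟩
      · intro x hx
        exact Finset.mem_compl.2 (Finset.mem_sdiff.1 hx).2
      · rw [Finset.card_sdiff_of_subset hg2, himg])
    (by
      intro g1 h1 g2 h2 heq
      obtain ⟨hg1, hT1⟩ := Finset.mem_filter.1 h1
      obtain ⟨hg2, hT2⟩ := Finset.mem_filter.1 h2
      have hsm1 : StrictMono g1 := (Finset.mem_filter.1 hg1).2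
      have hsm2 : StrictMono g2 := (Finset.mem_filter.1 hg2).2
      have heq' : Finset.univ.image g1 \ T = Finset.univ.image g2 \ T := heq
      have himg : Finset.univ.image g1 = Finset.univ.image g2 := by
        rw [← Finset.sdiff_union_of_subset hT1, ← Finset.sdiff_union_of_subset hT2, heq']
      have hrange : Set.range g1 = Set.range g2 := by
        rw [← Fintype.coe_image_univ, ← Fintype.coe_image_univ, himg]
      haveI : WellFoundedLT (Fin k) := Finite.to_wellFoundedLT
      exact (hsm1.range_inj hsm2).1 hrange)
  calc ((Finset.univ.filter (fun g : Fin k → Fin n => StrictMono g)).filter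
        (fun g => T ⊆ Finset.univ.image g)).card
      ≤ (Finset.powersetCard (k - T.card) Tᶜ).card := key
    _ = (n - T.card).choose (k - T.card) := by
        rw [Finset.card_powersetCard, Finset.card_compl, Fintype.card_fin]



/-- Counting lemma: let `H` be an ordered graph on `t` vertices, `σ = r₍(H,H,H)` the least
`N` such that the complete ordered graph on `N` vertices arrows `H` in any 3-coloring,
`ε = σ^(-σ)/4` and `δ = |E(H)|·σ^(-σ)/2`, and `n ≥ σ`. If `E₁, E₂ ⊆ E(Kₙ)` each induce at
most `ε·n^t` order-preserving copies of `H`, then `|E₁ ∪ E₂| ≤ (1 - δ)·C(n,2)`. -/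
theorem stmt9 {t : ℕ} (H : SimpleGraph (Fin t)) (σ n : ℕ)
    (hσ : IsLeast {N : ℕ | ∀ c : Sym2 (Fin N) → Fin 3,
        ∃ f : Fin t → Fin N, StrictMono f ∧
          ∃ k : Fin 3, ∀ u v, H.Adj u v → c s(f u, f v) = k} σ)
    (hn : σ ≤ n)
    (E1 E2 : Finset (Sym2 (Fin n)))
    (hE1 : ∀ e ∈ E1, ¬ e.IsDiag) (hE2 : ∀ e ∈ E2, ¬ e.IsDiag)
    (h1 : (Nat.card {f : Fin t → Fin n // StrictMono f ∧
        ∀ u v, H.Adj u v → s(f u, f v) ∈ E1} : ℝ) ≤ ((σ : ℝ) ^ σ)⁻¹ / 4 * n ^ t)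
    (h2 : (Nat.card {f : Fin t → Fin n // StrictMono f ∧
        ∀ u v, H.Adj u v → s(f u, f v) ∈ E2} : ℝ) ≤ ((σ : ℝ) ^ σ)⁻¹ / 4 * n ^ t) :
    ((E1 ∪ E2).card : ℝ) ≤
      (1 - (H.edgeSet.ncard : ℝ) * ((σ : ℝ) ^ σ)⁻¹ / 2) * (n.choose 2) := by
  classical
  have hsub : E1 ∪ E2 ⊆ (⊤ : SimpleGraph (Fin n)).edgeFinset := by
    intro e he
    rw [SimpleGraph.mem_edgeFinset, SimpleGraph.edgeSet_top, Set.mem_compl_iff, Sym2.mem_diagSet]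
    rcases Finset.mem_union.1 he with h | h
    · exact hE1 e h
    · exact hE2 e h
  have hcardtop : (⊤ : SimpleGraph (Fin n)).edgeFinset.card = n.choose 2 := by
    rw [SimpleGraph.card_edgeFinset_top_eq_card_choose_two, Fintype.card_fin]
  by_cases hm0 : H.edgeSet.ncard = 0
  · rw [hm0]
    have hle := Finset.card_le_card hsub
    rw [hcardtop] at hle
    have : ((E1 ∪ E2).card : ℝ) ≤ (n.choose 2 : ℝ) := by exact_mod_cast hle
    simpa using this
  -- Main case : H has at least one edge
  have hmcard : H.edgeSet.ncard = H.edgeFinset.card := by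
    rw [← SimpleGraph.coe_edgeFinset, Set.ncard_coe_finset]
  set m := H.edgeFinset.card with hm
  have hm1 : 1 ≤ m := by rw [hmcard] at hm0; omega
  obtain ⟨u₀, v₀, huv₀⟩ : ∃ u v, H.Adj u v := by
    by_contra hno
    push_neg at hno
    have : H = ⊥ := by ext u v; simp [hno u v]
    rw [this] at hm0
    simp at hm0
  have ht2 : 2 ≤ t := by
    have : Nontrivial (Fin t) := ⟨⟨u₀, v₀, huv₀.ne⟩⟩
    exact (by simpa using Fintype.one_lt_card (α := Fin t) : 1 < t)
  have hsig : ∀ c : Sym2 (Fin σ) → Fin 3, ∃ f : Fin t → Fin σ, StrictMono f ∧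
      ∃ k : Fin 3, ∀ u v, H.Adj u v → c s(f u, f v) = k := hσ.1
  have htσ : t ≤ σ := by
    obtain ⟨f, hf, -⟩ := hsig (fun _ => 0)
    simpa using Fintype.card_le_of_injective f hf.injective
  have hn0 : 0 < n := by omega
  -- the coloring
  set c : Sym2 (Fin n) → Fin 3 :=
    fun e => if e ∈ E1 then 0 else if e ∈ E2 then 1 else 2 with hcdef
  have hcE1 : ∀ e e' : Sym2 (Fin n), c e = c e' → e ∈ E1 → e' ∈ E1 := by
    intro e e' h he
    by_contra he'
    rw [hcdef] at h
    simp only [if_pos he, if_neg he'] at h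
    split_ifs at h <;> exact absurd h (by decide)
  have hcE2 : ∀ e e' : Sym2 (Fin n), c e = c e' → e ∉ E1 → e ∈ E2 → e' ∈ E2 := by
    intro e e' h he1 he2
    by_contra he'
    rw [hcdef] at h
    simp only [if_neg he1, if_pos he2, if_neg he'] at h
    split_ifs at h <;> exact absurd h (by decide)
  have hcE3 : ∀ e e' : Sym2 (Fin n), c e = c e' → e ∉ E1 → e ∉ E2 → e' ∉ E1 ∧ e' ∉ E2 := by
    intro e e' h he1 he2
    rw [hcdef] at h
    simp only [if_neg he1, if_neg he2] at h
    constructor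
    · intro he'
      rw [if_pos he'] at h
      exact absurd h (by decide)
    · intro he'
      by_cases hx : e' ∈ E1
      · rw [if_pos hx] at h; exact absurd h (by decide)
      · rw [if_neg hx, if_pos he'] at h; exact absurd h (by decide)
  -- the family of strictly monotone maps and the monochromatic copies
  set SM : ∀ k : ℕ, Finset (Fin k → Fin n) :=
    fun k => Finset.univ.filter (fun g : Fin k → Fin n => StrictMono g) with hSMdef
  set S : Finset (Fin t → Fin n) := (SM t).filter
    (fun h => ∃ k : Fin 3, ∀ u v, H.Adj u v → c s(h u, h v) = k) with hSdef
  choose F hF K hK using hsig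
  set Φ : (Fin σ → Fin n) → (Fin t → Fin n) :=
    fun g => g ∘ F (fun e => c (Sym2.map g e)) with hΦdef
  have hΦmem : ∀ g ∈ SM σ, Φ g ∈ S := by
    intro g hg
    have hg' : StrictMono g := (Finset.mem_filter.1 hg).2
    refine Finset.mem_filter.2 ⟨Finset.mem_filter.2 ⟨Finset.mem_univ _,
      hg'.comp (hF _)⟩, K (fun e => c (Sym2.map g e)), ?_⟩
    intro u v huv
    have := hK (fun e => c (Sym2.map g e)) u v huv
    simpa [hΦdef, Sym2.map_pair_eq] using this
  have hΦrange : ∀ g : Fin σ → Fin n, Finset.univ.image (Φ g) ⊆ Finset.univ.image g := by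
    intro g x hx
    obtain ⟨i, -, rfl⟩ := Finset.mem_image.1 hx
    exact Finset.mem_image.2 ⟨_, Finset.mem_univ _, rfl⟩
  -- counting monochromatic copies from below
  have hcount1 : n.choose σ ≤ S.card * ((n - t).choose (σ - t)) := by
    calc n.choose σ ≤ (SM σ).card := aux_sm_low n σ hn0
      _ = ∑ h ∈ S, ((SM σ).filter (fun g => Φ g = h)).card :=
          Finset.card_eq_sum_card_fiberwise hΦmem
      _ ≤ ∑ _h ∈ S, (n - t).choose (σ - t) := by
          refine Finset.sum_le_sum ?_
          intro h hh
          have hh' : StrictMono h :=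
            (Finset.mem_filter.1 (Finset.mem_filter.1 hh).1).2
          have hhc : (Finset.univ.image h).card = t := by
            rw [Finset.card_image_of_injective _ hh'.injective, Finset.card_univ,
              Fintype.card_fin]
          calc ((SM σ).filter (fun g => Φ g = h)).card
              ≤ ((SM σ).filter
                  (fun g => Finset.univ.image h ⊆ Finset.univ.image g)).card := by
                apply Finset.card_le_card
                intro g hg
                rw [Finset.mem_filter] at hg ⊢
                exact ⟨hg.1, hg.2 ▸ hΦrange g⟩
            _ ≤ (n - (Finset.univ.image h).card).choose (σ - (Finset.univ.image h).card) :=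
                aux_sm_fiber n σ _
            _ = (n - t).choose (σ - t) := by rw [hhc]
      _ = S.card * ((n - t).choose (σ - t)) := by
          rw [Finset.sum_const, smul_eq_mul]
  have hDpos : 0 < (n - t).choose (σ - t) := Nat.choose_pos (by omega)
  have hCpos : 0 < σ.choose t := Nat.choose_pos htσ
  have hkey : n ^ t ≤ σ ^ σ * S.card := by
    have h4 : n.choose t ≤ S.card * σ.choose t := by
      have h3 : n.choose t * ((n - t).choose (σ - t))
          ≤ (S.card * σ.choose t) * ((n - t).choose (σ - t)) := by
        calc n.choose t * ((n - t).choose (σ - t)) = n.choose σ * σ.choose t :=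
              (Nat.choose_mul htσ).symm
          _ ≤ (S.card * ((n - t).choose (σ - t))) * σ.choose t :=
              Nat.mul_le_mul_right _ hcount1
          _ = (S.card * σ.choose t) * ((n - t).choose (σ - t)) := by ring
      exact Nat.le_of_mul_le_mul_right h3 hDpos
    have h5 : (n ^ t) * σ.choose t ≤ (σ ^ σ * S.card) * σ.choose t := by
      calc n ^ t * σ.choose t ≤ σ ^ σ * n.choose t := aux_choose t σ n htσ hn
        _ ≤ σ ^ σ * (S.card * σ.choose t) := Nat.mul_le_mul_left _ h4
        _ = (σ ^ σ * S.card) * σ.choose t := by ring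
    exact Nat.le_of_mul_le_mul_right h5 hCpos
  -- the three copy classes
  set E3 : Finset (Sym2 (Fin n)) := (⊤ : SimpleGraph (Fin n)).edgeFinset \ (E1 ∪ E2) with hE3def
  set F1' : Finset (Fin t → Fin n) := Finset.univ.filter
    (fun f => StrictMono f ∧ ∀ u v, H.Adj u v → s(f u, f v) ∈ E1) with hF1def
  set F2' : Finset (Fin t → Fin n) := Finset.univ.filter
    (fun f => StrictMono f ∧ ∀ u v, H.Adj u v → s(f u, f v) ∈ E2) with hF2def
  set F3' : Finset (Fin t → Fin n) := Finset.univ.filter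
    (fun f => StrictMono f ∧ ∀ u v, H.Adj u v → s(f u, f v) ∈ E3) with hF3def
  have hS_sub : S ⊆ F1' ∪ F2' ∪ F3' := by
    intro h hh
    obtain ⟨hmem, k, hk⟩ := Finset.mem_filter.1 hh
    have hsm : StrictMono h := (Finset.mem_filter.1 hmem).2
    have hsame : ∀ u v, H.Adj u v → c s(h u, h v) = c s(h u₀, h v₀) := by
      intro u v huv
      rw [hk u v huv, hk u₀ v₀ huv₀]
    by_cases hx1 : s(h u₀, h v₀) ∈ E1
    · refine Finset.mem_union.2 (Or.inl (Finset.mem_union.2 (Or.inl ?_)))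
      refine Finset.mem_filter.2 ⟨Finset.mem_univ _, hsm, ?_⟩
      intro u v huv
      exact hcE1 _ _ (hsame u v huv).symm hx1
    · by_cases hx2 : s(h u₀, h v₀) ∈ E2
      · refine Finset.mem_union.2 (Or.inl (Finset.mem_union.2 (Or.inr ?_)))
        refine Finset.mem_filter.2 ⟨Finset.mem_univ _, hsm, ?_⟩
        intro u v huv
        exact hcE2 _ _ (hsame u v huv).symm hx1 hx2
      · refine Finset.mem_union.2 (Or.inr ?_)
        refine Finset.mem_filter.2 ⟨Finset.mem_univ _, hsm, ?_⟩
        intro u v huv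
        obtain ⟨hne1, hne2⟩ := hcE3 _ _ (hsame u v huv).symm hx1 hx2
        rw [hE3def]
        refine Finset.mem_sdiff.2 ⟨?_, ?_⟩
        · rw [SimpleGraph.mem_edgeFinset, SimpleGraph.edgeSet_top, Set.mem_compl_iff, Sym2.mem_diagSet]
          simp [Sym2.mk_isDiag_iff, hsm.injective.ne huv.ne]
        · intro hmem'
          rcases Finset.mem_union.1 hmem' with h' | h'
          · exact hne1 h'
          · exact hne2 h'
    -- double counting edges of copies in E3
  have hdouble : F3'.card * m ≤ E3.card * n ^ (t - 2) := by
    apply Finset.card_mul_le_card_mul (fun f e => e ∈ H.edgeFinset.image (Sym2.map f))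
    · intro f hf
      obtain ⟨-, hsm, hmaps⟩ := Finset.mem_filter.1 hf
      have hinj := Sym2.map.injective (f := f) hsm.injective
      have himg : H.edgeFinset.image (Sym2.map f) ⊆
          E3.bipartiteAbove (fun f e => e ∈ H.edgeFinset.image (Sym2.map f)) f := by
        intro e he
        rw [Finset.mem_bipartiteAbove]
        refine ⟨?_, he⟩
        obtain ⟨ed, hed, rfl⟩ := Finset.mem_image.1 he
        revert hed
        induction ed using Sym2.ind with
        | _ u v =>
          intro hed
          rw [Sym2.map_pair_eq]
          exact hmaps u v ((H.mem_edgeSet).1 (SimpleGraph.mem_edgeFinset.1 hed))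
      calc m = (H.edgeFinset.image (Sym2.map f)).card :=
            (Finset.card_image_of_injective _ hinj).symm
        _ ≤ _ := Finset.card_le_card himg
    · intro e he
      have hne : ¬ e.IsDiag := by
        rw [hE3def] at he
        have h' := (Finset.mem_sdiff.1 he).1
        rw [SimpleGraph.mem_edgeFinset, SimpleGraph.edgeSet_top, Set.mem_compl_iff, Sym2.mem_diagSet] at h'
        exact h'
      clear he
      revert hne
      induction e using Sym2.ind with
      | _ a b =>
        intro hne
        have hab : a ≠ b := fun h => hne (by simp [h])
        calc (F3'.bipartiteBelow
              (fun f e => e ∈ H.edgeFinset.image (Sym2.map f)) s(a, b)).card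
            ≤ ((SM t).filter
                (fun f => ({a, b} : Finset (Fin n)) ⊆ Finset.univ.image f)).card := by
              apply Finset.card_le_card
              intro f hf
              rw [Finset.mem_bipartiteBelow] at hf
              obtain ⟨hfF, hr⟩ := hf
              have hsm : StrictMono f := (Finset.mem_filter.1 hfF).2.1
              refine Finset.mem_filter.2 ⟨Finset.mem_filter.2 ⟨Finset.mem_univ _, hsm⟩, ?_⟩
              obtain ⟨ed, hed, hmap⟩ := Finset.mem_image.1 hr
              intro x hx
              have hxmem : x ∈ Sym2.map f ed := by
                rw [hmap]
                rcases Finset.mem_insert.1 hx with rfl | hx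
                · exact Sym2.mem_mk_left _ _
                · rw [Finset.mem_singleton.1 hx]
                  exact Sym2.mem_mk_right _ _
              obtain ⟨y, -, hy⟩ := Sym2.mem_map.1 hxmem
              exact Finset.mem_image.2 ⟨y, Finset.mem_univ _, hy⟩
          _ ≤ (n - ({a, b} : Finset (Fin n)).card).choose
                (t - ({a, b} : Finset (Fin n)).card) := aux_sm_fiber n t _
          _ ≤ n ^ (t - 2) := by
              rw [Finset.card_pair hab]
              calc (n - 2).choose (t - 2) ≤ (n - 2) ^ (t - 2) := Nat.choose_le_pow _ _
                _ ≤ n ^ (t - 2) := Nat.pow_le_pow_left (Nat.sub_le n 2) _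
  -- assembling the counts
  have hsplit : (E1 ∪ E2).card + E3.card = n.choose 2 := by
    have hle := Finset.card_le_card hsub
    rw [hE3def, Finset.card_sdiff_of_subset hsub, ← hcardtop]
    omega
  have hScard : S.card ≤ F1'.card + F2'.card + F3'.card := by
    calc S.card ≤ (F1' ∪ F2' ∪ F3').card := Finset.card_le_card hS_sub
      _ ≤ (F1' ∪ F2').card + F3'.card := Finset.card_union_le _ _
      _ ≤ F1'.card + F2'.card + F3'.card := by
          have := Finset.card_union_le F1' F2'
          omega
  have hF1c : F1'.card = Nat.card {f : Fin t → Fin n // StrictMono f ∧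
      ∀ u v, H.Adj u v → s(f u, f v) ∈ E1} := by
    rw [Nat.card_eq_fintype_card, Fintype.card_subtype, hF1def]
  have hF2c : F2'.card = Nat.card {f : Fin t → Fin n // StrictMono f ∧
      ∀ u v, H.Adj u v → s(f u, f v) ∈ E2} := by
    rw [Nat.card_eq_fintype_card, Fintype.card_subtype, hF2def]
  -- real arithmetic
  set a : ℝ := (σ : ℝ) ^ σ with hadef
  have hσ2 : 2 ≤ σ := le_trans ht2 htσ
  have ha : 0 < a := by
    have hσ0 : 0 < σ := lt_of_lt_of_le (by norm_num) hσ2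
    have hσR : (0:ℝ) < (σ:ℝ) := Nat.cast_pos.mpr hσ0
    exact pow_pos hσR σ
  have hkeyR : ((n:ℝ)) ^ t ≤ a * S.card := by rw [hadef]; exact_mod_cast hkey
  have hF1R : (F1'.card : ℝ) ≤ a⁻¹ / 4 * (n:ℝ) ^ t := by rw [hF1c]; exact h1
  have hF2R : (F2'.card : ℝ) ≤ a⁻¹ / 4 * (n:ℝ) ^ t := by rw [hF2c]; exact h2
  have hSR : (S.card : ℝ) ≤ (F1'.card : ℝ) + F2'.card + F3'.card := by exact_mod_cast hScard
  have hf3 : (n:ℝ) ^ t / 2 ≤ a * F3'.card := by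
    have e1 : a * F1'.card ≤ (n:ℝ) ^ t / 4 := by
      calc a * F1'.card ≤ a * (a⁻¹ / 4 * (n:ℝ) ^ t) := mul_le_mul_of_nonneg_left hF1R ha.le
        _ = (n:ℝ) ^ t / 4 := by field_simp
    have e2 : a * F2'.card ≤ (n:ℝ) ^ t / 4 := by
      calc a * F2'.card ≤ a * (a⁻¹ / 4 * (n:ℝ) ^ t) := mul_le_mul_of_nonneg_left hF2R ha.le
        _ = (n:ℝ) ^ t / 4 := by field_simp
    have e3 : a * S.card ≤ a * F1'.card + a * F2'.card + a * F3'.card := by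
      calc a * S.card ≤ a * ((F1'.card : ℝ) + F2'.card + F3'.card) :=
            mul_le_mul_of_nonneg_left hSR ha.le
        _ = _ := by ring
    linarith
  have hdR : (F3'.card : ℝ) * m ≤ (E3.card : ℝ) * (n:ℝ) ^ (t - 2) := by exact_mod_cast hdouble
  have hnt2 : (0:ℝ) < (n:ℝ) ^ (t - 2) := by positivity
  have hntid : (n:ℝ) ^ t = (n:ℝ) ^ (t - 2) * (n:ℝ) ^ 2 := by
    rw [← pow_add, Nat.sub_add_cancel ht2]
  have hmR : (1:ℝ) ≤ (m:ℝ) := by exact_mod_cast hm1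
  have he3 : (m : ℝ) * (n:ℝ) ^ 2 ≤ 2 * (a * E3.card) := by
    have h6 : (m:ℝ) * ((n:ℝ) ^ t / 2) ≤ (m:ℝ) * (a * F3'.card) :=
      mul_le_mul_of_nonneg_left hf3 (by linarith)
    have h7 : a * ((F3'.card : ℝ) * m) ≤ a * ((E3.card : ℝ) * (n:ℝ) ^ (t-2)) :=
      mul_le_mul_of_nonneg_left hdR ha.le
    rw [hntid] at h6
    have h8 : ((m:ℝ) * (n:ℝ)^2) * (n:ℝ)^(t-2) ≤ (2 * (a * E3.card)) * (n:ℝ)^(t-2) := by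
      linarith [h6, h7]
    exact le_of_mul_le_mul_right h8 hnt2
  have hsplitR : ((E1 ∪ E2).card : ℝ) + E3.card = (n.choose 2 : ℝ) := by exact_mod_cast hsplit
  have hch2 : 2 * (n.choose 2 : ℝ) ≤ (n:ℝ) ^ 2 := by
    have h9 : ((2 * n.choose 2 : ℕ) : ℝ) ≤ ((n * n : ℕ) : ℝ) := by
      exact_mod_cast aux_choose2 n
    push_cast at h9
    rw [sq]
    linarith
  have hchpos : (0:ℝ) ≤ (n.choose 2 : ℝ) := Nat.cast_nonneg _
  rw [hmcard]
  have hE3ch : (m:ℝ) * (n.choose 2:ℝ) / 2 ≤ a * E3.card := by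
    have k0 : (0:ℝ) ≤ (m:ℝ) := by linarith
    have k1 : (m:ℝ) * (2 * (n.choose 2:ℝ)) ≤ (m:ℝ) * ((n:ℝ)^2) :=
      mul_le_mul_of_nonneg_left hch2 k0
    have k2 : (0:ℝ) ≤ (m:ℝ) * (n.choose 2:ℝ) := mul_nonneg k0 hchpos
    linarith [he3, k1, k2]
  have hmain : a * ((E1 ∪ E2).card : ℝ) ≤
      a * ((1 - (m:ℝ) * a⁻¹ / 2) * (n.choose 2 : ℝ)) := by
    have hX : a * ((1 - (m:ℝ) * a⁻¹ / 2) * (n.choose 2:ℝ))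
        = a * (n.choose 2:ℝ) - (m:ℝ) * (n.choose 2:ℝ) / 2 := by
      field_simp
    rw [hX]
    have hsp : a * ((E1 ∪ E2).card : ℝ) = a * (n.choose 2:ℝ) - a * E3.card := by
      linear_combination a * hsplitR
    linarith
  exact le_of_mul_le_mul_left hmain ha
end

section
/- If H' is a monotone matching (an intervally disjoint union K2 ⊔ ... ⊔ K2 of single edges, each entirely to the left of the next) and H is any ordered graph without isolated vertices, then the pair (H, H') is Ramsey finite: there are only finitely many minimal ordered Ramsey graphs of (H, H') up to order-isomorphism. -/
/-- `F'` is (isomorphic to) an ordered subgraph of `F`. -/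
def IsOrdSubgraph {k n : ℕ} (F' : SimpleGraph (Fin k)) (F : SimpleGraph (Fin n)) : Prop :=
  ∃ φ : Fin k → Fin n, StrictMono φ ∧ ∀ u v, F'.Adj u v → F.Adj (φ u) (φ v)

/-- `F` is a minimal ordered Ramsey graph of `(H, H')`: it arrows `(H, H')` and no proper
ordered subgraph of it does. -/
def MinimalOrdRamsey {m m' n : ℕ} (F : SimpleGraph (Fin n))
    (H : SimpleGraph (Fin m)) (H' : SimpleGraph (Fin m')) : Prop :=
  OrdArrows F H H' ∧ ∀ (k : ℕ) (F' : SimpleGraph (Fin k)),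
    IsOrdSubgraph F' F → ¬ IsOrdSubgraph F F' → ¬ OrdArrows F' H H'

namespace Stmt11Aux

variable {m n : ℕ}

/-- `c` is a valid cut of `H`: no edge of `H` crosses position `c`. -/
def VCut (H : SimpleGraph (Fin m)) (c : ℕ) : Prop :=
  ∀ u v : Fin m, H.Adj u v → ¬(u.val < c ∧ c ≤ v.val)

/-- A response to the adversary tuple `p`: a partial (suffix from `c`) ordered embedding of
`H` into `F`, with all values `≥ x`, inside `U`, whose edges avoid all stab points `p j`. -/
def Resp (H : SimpleGraph (Fin m)) (F : SimpleGraph (Fin n)) (U : Finset (Fin n))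
    (x c : ℕ) {t : ℕ} (p : Fin t → ℕ) : Prop :=
  ∃ f : Fin m → Fin n,
    (∀ u : Fin m, c ≤ u.val → x ≤ (f u).val ∧ f u ∈ U) ∧
    (∀ u v : Fin m, c ≤ u.val → c ≤ v.val → u < v → f u < f v) ∧
    (∀ u v : Fin m, H.Adj u v → c ≤ u.val → c ≤ v.val → F.Adj (f u) (f v)) ∧
    (∀ u v : Fin m, H.Adj u v → c ≤ u.val → c ≤ v.val →
      ∀ j, ¬((f u).val ≤ p j ∧ p j ≤ (f v).val))

def Rr (H : SimpleGraph (Fin m)) (F : SimpleGraph (Fin n)) (U : Finset (Fin n))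
    (t x c : ℕ) : Prop :=
  ∀ p : Fin t → ℕ, Resp H F U x c p

def MidE (H : SimpleGraph (Fin m)) (F : SimpleGraph (Fin n)) (g : Fin m → Fin n)
    (x y c c' : ℕ) : Prop :=
  (∀ u : Fin m, c ≤ u.val → u.val < c' → x ≤ (g u).val ∧ (g u).val < y) ∧
  (∀ u v : Fin m, c ≤ u.val → c ≤ v.val → u.val < c' → v.val < c' → u < v → g u < g v) ∧
  (∀ u v : Fin m, H.Adj u v → c ≤ u.val → c ≤ v.val → u.val < c' → v.val < c' →
    F.Adj (g u) (g v))

variable {H : SimpleGraph (Fin m)} {F : SimpleGraph (Fin n)} {U U' : Finset (Fin n)}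

lemma Rr.mono_x {t x x' c : ℕ} (h : Rr H F U t x c) (hx : x' ≤ x) : Rr H F U t x' c := by
  intro p
  obtain ⟨f, h1, h2, h3, h4⟩ := h p
  exact ⟨f, fun u hu => ⟨le_trans hx (h1 u hu).1, (h1 u hu).2⟩, h2, h3, h4⟩

lemma Rr.mono_U {t x c : ℕ} (h : Rr H F U t x c) (hU : U ⊆ U') : Rr H F U' t x c := by
  intro p
  obtain ⟨f, h1, h2, h3, h4⟩ := h p
  exact ⟨f, fun u hu => ⟨(h1 u hu).1, hU (h1 u hu).2⟩, h2, h3, h4⟩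

/-- It suffices to respond to adversary tuples whose entries are `≤ n`. -/
lemma rr_of_capped {t x c : ℕ} (h : ∀ p : Fin t → ℕ, (∀ j, p j ≤ n) → Resp H F U x c p) :
    Rr H F U t x c := by
  intro p
  obtain ⟨f, h1, h2, h3, h4⟩ := h (fun j => min (p j) n) (fun j => min_le_right _ _)
  refine ⟨f, h1, h2, h3, fun u v ha hu hv j hbad => ?_⟩
  rcases le_or_gt (p j) n with hle | hgt
  · refine h4 u v ha hu hv j ?_
    simp only [min_eq_left hle]
    exact hbad
  · exact absurd hbad.2 (by have := (f v).isLt; omega)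

lemma step (hiso : ∀ v, ∃ w, H.Adj v w) {t x c : ℕ} (hc : VCut H c) (hcm : c ≤ m)
    (hR : Rr H F Finset.univ (t+1) x c) (p : ℕ) :
    ∃ c', c ≤ c' ∧ c' ≤ m ∧ VCut H c' ∧ (∃ g, MidE H F g x p c c') ∧
      Rr H F Finset.univ t (max (p+1) x) c' := by
  classical
  obtain ⟨f₀, -, -, -, -⟩ := hR (fun _ => 0)
  set P : ℕ → Prop := fun d => c ≤ d ∧ d ≤ m ∧ VCut H d ∧ ∃ g, MidE H F g x p c d with hP
  have hPc : P c := by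
    refine ⟨le_refl c, hcm, hc, f₀, ?_, ?_, ?_⟩
    · intro u hu hlt; omega
    · intro u v hu hv hlt _ _; omega
    · intro u v _ hu _ hlt _; omega
  set cs : ℕ := Nat.findGreatest P m with hcs
  have hPcs : P cs := Nat.findGreatest_spec hcm hPc
  by_cases hRs : Rr H F Finset.univ t (max (p+1) x) cs
  · exact ⟨cs, hPcs.1, hPcs.2.1, hPcs.2.2.1, hPcs.2.2.2, hRs⟩
  exfalso
  obtain ⟨q, hq⟩ := not_forall.mp hRs
  set pq : Fin (t+1) → ℕ := Fin.cases p q with hpq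
  obtain ⟨f, h1, h2, h3, h4⟩ := hR pq
  have h4p : ∀ u v : Fin m, H.Adj u v → c ≤ u.val → c ≤ v.val →
      ¬((f u).val ≤ p ∧ p ≤ (f v).val) := by
    intro u v ha hu hv
    have := h4 u v ha hu hv 0
    rwa [show pq 0 = p from Fin.cases_zero] at this
  -- no suffix vertex maps exactly to p
  have hne : ∀ u : Fin m, c ≤ u.val → (f u).val ≠ p := by
    intro u hu heq
    obtain ⟨w, hw⟩ := hiso u
    have hwc : c ≤ w.val := by
      by_contra hlt
      exact hc w u hw.symm ⟨by omega, hu⟩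
    rcases le_total (f u).val (f w).val with hle | hle
    · exact h4p u w hw hu hwc ⟨by omega, by omega⟩
    · exact h4p w u hw.symm hwc hu ⟨by omega, by omega⟩
  -- the split point
  have hQex : ∃ d, c ≤ d ∧ ∀ u : Fin m, d ≤ u.val → p < (f u).val :=
    ⟨m, hcm, fun u hu => absurd u.isLt (by omega)⟩
  set ct : ℕ := Nat.find hQex with hct
  have hQct := Nat.find_spec hQex
  have hctm : ct ≤ m := Nat.find_le ⟨hcm, fun u hu => absurd u.isLt (by omega)⟩
  have hbelow : ∀ u : Fin m, c ≤ u.val → u.val < ct → (f u).val < p := by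
    intro u hu hlt
    by_contra hge
    have hgt : p < (f u).val := lt_of_le_of_ne (by omega) (Ne.symm (hne u hu))
    refine Nat.find_min hQex hlt ⟨hu, fun w hwu => ?_⟩
    rcases eq_or_lt_of_le hwu with heq | hlt'
    · have : w = u := Fin.ext heq.symm
      rw [this]; exact hgt
    · have huw : u < w := hlt'
      exact lt_trans hgt (h2 u w hu (by omega) huw)
  have hvalid : VCut H ct := by
    rintro u v ha ⟨hu_lt, hct_le⟩
    by_cases huc : c ≤ u.val
    · have hb := hbelow u huc hu_lt
      have hg := hQct.2 v hct_le
      exact h4p u v ha huc (le_trans hQct.1 hct_le) ⟨by omega, by omega⟩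
    · exact hc u v ha ⟨by omega, le_trans hQct.1 hct_le⟩
  have hPct : P ct := by
    refine ⟨hQct.1, hctm, hvalid, f, ?_, ?_, ?_⟩
    · exact fun u hu hlt => ⟨(h1 u hu).1, hbelow u hu hlt⟩
    · exact fun u v hu hv _ _ hlt => h2 u v hu hv hlt
    · exact fun u v ha hu hv _ _ => h3 u v ha hu hv
  have hlecs : ct ≤ cs := Nat.le_findGreatest hctm hPct
  refine hq ⟨f, ?_, ?_, ?_, ?_⟩
  · intro u hu
    have huc : c ≤ u.val := le_trans hPcs.1 hu
    have := hQct.2 u (le_trans hlecs hu)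
    exact ⟨by have := (h1 u huc).1; omega, Finset.mem_univ _⟩
  · exact fun u v hu hv hlt => h2 u v (le_trans hPcs.1 hu) (le_trans hPcs.1 hv) hlt
  · exact fun u v ha hu hv => h3 u v ha (le_trans hPcs.1 hu) (le_trans hPcs.1 hv)
  · intro u v ha hu hv j
    have := h4 u v ha (le_trans hPcs.1 hu) (le_trans hPcs.1 hv) j.succ
    rwa [show pq j.succ = q j from Fin.cases_succ _] at this

/-- Size bound for the extracted witness. -/
def BB (m : ℕ) : ℕ → ℕ
  | 0 => m
  | (t+1) => (m+1) * (BB m t + m)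

lemma build (hiso : ∀ v, ∃ w, H.Adj v w) :
    ∀ (t c x : ℕ), c ≤ m → VCut H c → x ≤ n + 1 → Rr H F Finset.univ t x c →
      ∃ U : Finset (Fin n), U.card ≤ BB m t ∧ Rr H F U t x c := by
  intro t
  induction t with
  | zero =>
    intro c x hcm hc hx hR
    obtain ⟨f, h1, h2, h3, _⟩ := hR Fin.elim0
    refine ⟨Finset.image f Finset.univ, ?_, ?_⟩
    · calc (Finset.image f Finset.univ).card ≤ (Finset.univ : Finset (Fin m)).card :=
            Finset.card_image_le
        _ = m := by simp
    · intro p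
      exact ⟨f, fun u hu => ⟨(h1 u hu).1,
          Finset.mem_image_of_mem f (Finset.mem_univ u)⟩,
        h2, h3, fun u v ha hu hv j => j.elim0⟩
  | succ t ih =>
    intro c x hcm hc hx hR
    classical
    obtain ⟨f₀, -, -, -, -⟩ := hR (fun _ => 0)
    set X : ℕ → ℕ := fun c' =>
      Nat.findGreatest (fun s => Rr H F Finset.univ t s c') (n+1) with hX
    have hV : ∀ c' : ℕ, ∃ V : Finset (Fin n), V.card ≤ BB m t ∧
        ((c' ≤ m ∧ VCut H c' ∧ Rr H F Finset.univ t (X c') c') →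
          Rr H F V t (X c') c') := by
      intro c'
      by_cases hgood : c' ≤ m ∧ VCut H c' ∧ Rr H F Finset.univ t (X c') c'
      · obtain ⟨V, hVc, hVR⟩ := ih c' (X c') hgood.1 hgood.2.1
          (Nat.findGreatest_le _) hgood.2.2
        exact ⟨V, hVc, fun _ => hVR⟩
      · exact ⟨∅, by simp [BB], fun hg => absurd hg hgood⟩
    choose V hVcard hVR using hV
    have hG : ∀ c' : ℕ, ∃ (g : Fin m → Fin n) (y : ℕ),
        (∃ y₀ g₀, MidE H F g₀ x y₀ c c') →
          (MidE H F g x y c c' ∧ ∀ y' g', MidE H F g' x y' c c' → y ≤ y') := by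
      intro c'
      by_cases hex : ∃ y₀, ∃ g₀, MidE H F g₀ x y₀ c c'
      · obtain ⟨g₁, hg₁⟩ := Nat.find_spec hex
        refine ⟨g₁, Nat.find hex, fun _ => ⟨hg₁, fun y' g' hmid => ?_⟩⟩
        by_contra hlt
        exact Nat.find_min hex (by omega) ⟨g', hmid⟩
      · exact ⟨f₀, 0, fun hg => absurd hg hex⟩
    choose g y hGspec using hG
    refine ⟨(Finset.range (m+1)).biUnion
        (fun c' => V c' ∪ Finset.image (g c') Finset.univ), ?_, ?_⟩
    · calc ((Finset.range (m+1)).biUnion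
            (fun c' => V c' ∪ Finset.image (g c') Finset.univ)).card
          ≤ ∑ c' ∈ Finset.range (m+1), (V c' ∪ Finset.image (g c') Finset.univ).card :=
            Finset.card_biUnion_le
        _ ≤ ∑ c' ∈ Finset.range (m+1), (BB m t + m) := by
            refine Finset.sum_le_sum fun c' _ => ?_
            calc (V c' ∪ Finset.image (g c') Finset.univ).card
                ≤ (V c').card + (Finset.image (g c') Finset.univ).card :=
                  Finset.card_union_le _ _
              _ ≤ BB m t + m := by
                  refine add_le_add (hVcard c') ?_
                  calc (Finset.image (g c') Finset.univ).card
                      ≤ (Finset.univ : Finset (Fin m)).card := Finset.card_image_le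
                    _ = m := by simp
        _ = (m+1) * (BB m t + m) := by
            rw [Finset.sum_const, Finset.card_range, smul_eq_mul]
        _ = BB m (t+1) := rfl
    · apply rr_of_capped
      intro p hp
      obtain ⟨j₀, hj₀⟩ := Finite.exists_min p
      set pm : ℕ := p j₀ with hpm
      obtain ⟨cs, hcs1, hcs2, hcs3, ⟨gmid, hgmid⟩, hcsR⟩ := step hiso hc hcm hR pm
      have hs_le : max (pm+1) x ≤ n + 1 := by have := hp j₀; omega
      have hXge : max (pm+1) x ≤ X cs :=
        Nat.le_findGreatest (P := fun s => Rr H F Finset.univ t s cs) hs_le hcsR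
      have hRX : Rr H F Finset.univ t (X cs) cs :=
        Nat.findGreatest_spec (P := fun s => Rr H F Finset.univ t s cs) hs_le hcsR
      have hVRcs : Rr H F (V cs) t (X cs) cs := hVR cs ⟨hcs2, hcs3, hRX⟩
      have hmid := hGspec cs ⟨pm, gmid, hgmid⟩
      have hy_le : y cs ≤ pm := hmid.2 pm gmid hgmid
      obtain ⟨hf, hh1, hh2, hh3, hh4⟩ :=
        (hVRcs.mono_x hXge) (fun j => p (j₀.succAbove j))
      set s : ℕ := max (pm+1) x with hs
      set ff : Fin m → Fin n := fun u => if u.val < cs then g cs u else hf u with hff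
      have hmem_cs : cs ∈ Finset.range (m+1) := Finset.mem_range.mpr (by omega)
      have hmidb := hmid.1.1
      have hsufb : ∀ u : Fin m, cs ≤ u.val → s ≤ (hf u).val ∧ hf u ∈ V cs := hh1
      refine ⟨ff, ?_, ?_, ?_, ?_⟩
      · intro u hu
        by_cases hlt : u.val < cs
        · refine ⟨?_, ?_⟩
          · simp only [hff, if_pos hlt]
            exact (hmidb u hu hlt).1
          · simp only [hff, if_pos hlt]
            exact Finset.mem_biUnion.mpr ⟨cs, hmem_cs,
              Finset.mem_union_right _ (Finset.mem_image_of_mem _ (Finset.mem_univ u))⟩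
        · have hcsu : cs ≤ u.val := by omega
          refine ⟨?_, ?_⟩
          · simp only [hff, if_neg hlt]
            have := (hsufb u hcsu).1
            omega
          · simp only [hff, if_neg hlt]
            exact Finset.mem_biUnion.mpr ⟨cs, hmem_cs,
              Finset.mem_union_left _ (hsufb u hcsu).2⟩
      · intro u v hu hv huv
        by_cases hltu : u.val < cs <;> by_cases hltv : v.val < cs
        · simp only [hff, if_pos hltu, if_pos hltv]
          exact hmid.1.2.1 u v hu hv hltu hltv huv
        · simp only [hff, if_pos hltu, if_neg hltv]
          have h1' := (hmidb u hu hltu).2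
          have h2' := (hsufb v (by omega)).1
          have : (g cs u).val < (hf v).val := by omega
          exact this
        · exact absurd huv (by simp only [Fin.lt_def]; omega)
        · simp only [hff, if_neg hltu, if_neg hltv]
          exact hh2 u v (by omega) (by omega) huv
      · intro u v ha hu hv
        by_cases hltu : u.val < cs <;> by_cases hltv : v.val < cs
        · simp only [hff, if_pos hltu, if_pos hltv]
          exact hmid.1.2.2 u v ha hu hv hltu hltv
        · exact absurd ⟨hltu, by omega⟩ (hcs3 u v ha)
        · exact absurd ⟨hltv, by omega⟩ (hcs3 v u ha.symm)
        · simp only [hff, if_neg hltu, if_neg hltv]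
          exact hh3 u v ha (by omega) (by omega)
      · intro u v ha hu hv j hbad
        by_cases hltv : v.val < cs
        · have h1' := (hmidb v hv hltv).2
          have := hj₀ j
          simp only [hff, if_pos hltv] at hbad
          omega
        · by_cases hltu : u.val < cs
          · exact absurd ⟨hltu, by omega⟩ (hcs3 u v ha)
          · simp only [hff, if_neg hltu, if_neg hltv] at hbad
            rcases eq_or_ne j j₀ with rfl | hne
            · have := (hsufb u (by omega)).1
              have hsle : pm + 1 ≤ s := le_max_left _ _
              omega
            · obtain ⟨j', hj'⟩ := Fin.exists_succAbove_eq hne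
              refine hh4 u v ha (by omega) (by omega) j' ?_
              show (hf u).val ≤ p (j₀.succAbove j') ∧ p (j₀.succAbove j') ≤ (hf v).val
              rw [hj']
              exact hbad

lemma pierce {u : ℕ} : ∀ (k : ℕ) (E : Finset (Fin u × Fin u)), (∀ e ∈ E, e.1 ≤ e.2) →
    (∃ ch : Fin (k+1) → Fin u × Fin u, (∀ i, ch i ∈ E) ∧
      (∀ i j : Fin (k+1), i < j → (ch i).2 < (ch j).1)) ∨
    (∃ p : Fin k → ℕ, ∀ e ∈ E, ∃ j, (e.1 : ℕ) ≤ p j ∧ p j ≤ (e.2 : ℕ)) := by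
  intro k
  induction k with
  | zero =>
    intro E hE
    by_cases hne : E.Nonempty
    · obtain ⟨e₀, he₀⟩ := hne
      refine Or.inl ⟨fun _ => e₀, fun _ => he₀, fun i j hij => ?_⟩
      exact absurd hij (by omega)
    · exact Or.inr ⟨Fin.elim0, fun e he => absurd (Finset.nonempty_of_ne_empty
        (Finset.ne_empty_of_mem he)) hne⟩
  | succ k ih =>
    intro E hE
    by_cases hne : E.Nonempty
    · obtain ⟨e₀, he₀E, hmin⟩ := E.exists_min_image Prod.snd hne
      classical
      set E' := E.filter (fun e => e₀.2 < e.1) with hE'def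
      have hE'le : ∀ e ∈ E', e.1 ≤ e.2 := fun e he => hE e (Finset.mem_filter.mp he).1
      rcases ih E' hE'le with ⟨ch, hmem, hord⟩ | ⟨p', hp'⟩
      · set ch' : Fin (k+2) → Fin u × Fin u :=
          fun i => if h : i.val = 0 then e₀ else ch ⟨i.val - 1, by omega⟩ with hch'
        refine Or.inl ⟨ch', ?_, ?_⟩
        · intro i
          by_cases h : i.val = 0
          · simp only [hch', dif_pos h]; exact he₀E
          · simp only [hch', dif_neg h]
            exact (Finset.mem_filter.mp (hmem _)).1
        · intro i j hij
          have hjne : ¬ j.val = 0 := by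
            have : i.val < j.val := hij
            omega
          by_cases h : i.val = 0
          · simp only [hch', dif_pos h, dif_neg hjne]
            exact (Finset.mem_filter.mp (hmem _)).2
          · simp only [hch', dif_neg h, dif_neg hjne]
            refine hord _ _ ?_
            show i.val - 1 < j.val - 1
            have : i.val < j.val := hij
            omega
      · set p : Fin (k+1) → ℕ :=
          fun j => if h : j.val = 0 then (e₀.2 : ℕ) else p' ⟨j.val - 1, by omega⟩ with hpdef
        refine Or.inr ⟨p, fun e he => ?_⟩
        by_cases hgt : e₀.2 < e.1
        · obtain ⟨j, hj⟩ := hp' e (Finset.mem_filter.mpr ⟨he, hgt⟩)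
          refine ⟨⟨j.val + 1, by omega⟩, ?_⟩
          simp only [hpdef, dif_neg (by omega : ¬ (j.val + 1 = 0))]
          simpa using hj
        · refine ⟨⟨0, by omega⟩, ?_⟩
          simp only [hpdef, dif_pos rfl]
          exact ⟨by exact_mod_cast not_lt.mp hgt, by exact_mod_cast hmin e he⟩
    · exact Or.inr ⟨fun _ => 0, fun e he => absurd (Finset.nonempty_of_ne_empty
        (Finset.ne_empty_of_mem he)) hne⟩

/-- Arrowing gives the oblivious embedding property (with full copies, cut `0`). -/
lemma rr_of_arrows {k' : ℕ} {H' : SimpleGraph (Fin (2 * (k' + 1)))}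
    (hH' : ∀ a b : Fin (2 * (k' + 1)), H'.Adj a b ↔ (a ≠ b ∧ a.val / 2 = b.val / 2))
    (hA : OrdArrows F H H') : Rr H F Finset.univ k' 0 0 := by
  classical
  intro p
  set χ : Sym2 (Fin n) → Bool := fun e =>
    decide (¬ ∃ (j : Fin k') (a b : Fin n), e = s(a, b) ∧ (a : ℕ) ≤ p j ∧ p j ≤ (b : ℕ))
    with hχ
  rcases hA χ with ⟨f, ⟨hmono, hadj⟩, hred⟩ | ⟨g, ⟨hmono, hadj⟩, hblue⟩
  · refine ⟨f, fun u _ => ⟨Nat.zero_le _, Finset.mem_univ _⟩,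
      fun u v _ _ huv => hmono huv, fun u v ha _ _ => hadj u v ha, ?_⟩
    intro u v ha _ _ j hbad
    have := hred u v ha
    rw [hχ] at this
    have h2 := of_decide_eq_true this
    exact h2 ⟨j, f u, f v, rfl, hbad.1, hbad.2⟩
  · exfalso
    -- each blue matching edge must be stabbed; pigeonhole on k'+1 edges vs k' points
    have hstab : ∀ i : Fin (k' + 1), ∃ j : Fin k',
        ((g ⟨2 * i.val, by omega⟩ : Fin n) : ℕ) ≤ p j ∧
          p j ≤ ((g ⟨2 * i.val + 1, by omega⟩ : Fin n) : ℕ) := by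
      intro i
      set a : Fin (2 * (k' + 1)) := ⟨2 * i.val, by omega⟩
      set b : Fin (2 * (k' + 1)) := ⟨2 * i.val + 1, by omega⟩
      have hadj' : H'.Adj a b := (hH' a b).mpr ⟨by
        intro h; exact absurd (congrArg Fin.val h) (by simp [a, b]), by
        simp only [a, b]; omega⟩
      have hab : g a < g b := hmono (by simp only [Fin.lt_def, a, b]; omega)
      have := hblue a b hadj'
      rw [hχ] at this
      have h2 := of_decide_eq_false this
      rcases not_not.mp h2 with ⟨j, aa, bb, heq, h1', h2'⟩
      rcases Sym2.eq_iff.mp heq with ⟨ha', hb'⟩ | ⟨ha', hb'⟩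
      · rw [← ha'] at h1'
        rw [← hb'] at h2'
        exact ⟨j, h1', h2'⟩
      · exfalso
        rw [ha', hb'] at hab
        have : (bb : ℕ) < (aa : ℕ) := hab
        omega
    choose jmap hjmap using hstab
    have hcard : Fintype.card (Fin k') < Fintype.card (Fin (k' + 1)) := by simp
    obtain ⟨i₁, i₂, hne, heq⟩ := Fintype.exists_ne_map_eq_of_card_lt jmap hcard
    rcases Ne.lt_or_gt hne with hlt | hlt
    all_goals {
      first
      | (have hsep : g ⟨2 * i₁.val + 1, by omega⟩ < g ⟨2 * i₂.val, by omega⟩ :=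
          hmono (by simp only [Fin.lt_def]; omega)
         have h1 := (hjmap i₁).2
         have h2 := (hjmap i₂).1
         rw [heq] at h1
         have : ((g ⟨2 * i₁.val + 1, by omega⟩ : Fin n) : ℕ) <
           ((g ⟨2 * i₂.val, by omega⟩ : Fin n) : ℕ) := hsep
         omega)
      | (have hsep : g ⟨2 * i₂.val + 1, by omega⟩ < g ⟨2 * i₁.val, by omega⟩ :=
          hmono (by simp only [Fin.lt_def]; omega)
         have h1 := (hjmap i₂).2
         have h2 := (hjmap i₁).1
         rw [heq] at h2
         have : ((g ⟨2 * i₂.val + 1, by omega⟩ : Fin n) : ℕ) <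
           ((g ⟨2 * i₁.val, by omega⟩ : Fin n) : ℕ) := hsep
         omega)
    }

/-- From the bounded-witness embedding property, the subgraph induced on `U` arrows. -/
lemma ordArrows_of_Rr {k' : ℕ} {H' : SimpleGraph (Fin (2 * (k' + 1)))}
    (hH' : ∀ a b : Fin (2 * (k' + 1)), H'.Adj a b ↔ (a ≠ b ∧ a.val / 2 = b.val / 2))
    {U : Finset (Fin n)} (hR : Rr H F U k' 0 0) :
    OrdArrows (F.comap (fun a : Fin U.card => ((U.orderIsoOfFin rfl a : U) : Fin n))) H H' := by
  classical
  intro χ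
  set ι := U.orderIsoOfFin rfl with hι
  set F' := F.comap (fun a : Fin U.card => ((ι a : U) : Fin n)) with hF'
  set E : Finset (Fin U.card × Fin U.card) := Finset.univ.filter
    (fun e => e.1 ≤ e.2 ∧ F'.Adj e.1 e.2 ∧ χ s(e.1, e.2) = false) with hE
  have hEle : ∀ e ∈ E, e.1 ≤ e.2 := fun e he => (Finset.mem_filter.mp he).2.1
  rcases pierce k' E hEle with ⟨ch, hmem, hord⟩ | ⟨p', hp'⟩
  · -- blue monotone matching
    right
    have hch1 : ∀ i, (ch i).1 ≤ (ch i).2 := fun i =>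
      (Finset.mem_filter.mp (hmem i)).2.1
    have hch2 : ∀ i, F'.Adj (ch i).1 (ch i).2 := fun i =>
      (Finset.mem_filter.mp (hmem i)).2.2.1
    have hch3 : ∀ i, χ s((ch i).1, (ch i).2) = false := fun i =>
      (Finset.mem_filter.mp (hmem i)).2.2.2
    clear hmem
    have hpair : ∀ a : Fin (k' + 1), (ch a).1 < (ch a).2 := fun a =>
      lt_of_le_of_ne (hch1 a) (hch2 a).ne
    set g : Fin (2 * (k' + 1)) → Fin U.card := fun i =>
      if i.val % 2 = 0 then (ch ⟨i.val / 2, by omega⟩).1 else (ch ⟨i.val / 2, by omega⟩).2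
      with hg
    have hmono : StrictMono g := by
      intro i j hij
      have hijv : i.val < j.val := hij
      by_cases h2 : i.val / 2 = j.val / 2
      · have hi0 : i.val % 2 = 0 := by omega
        have hj1 : ¬ (j.val % 2 = 0) := by omega
        simp only [hg, if_pos hi0, if_neg hj1]
        have : (⟨i.val / 2, by omega⟩ : Fin (k' + 1)) = ⟨j.val / 2, by omega⟩ :=
          Fin.ext h2
        rw [this]
        exact hpair _
      · have hlt2 : i.val / 2 < j.val / 2 := by
          rcases Nat.lt_or_ge (i.val / 2) (j.val / 2) with h | h
          · exact h
          · omega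
        have hmid : (ch ⟨i.val / 2, by omega⟩).2 < (ch ⟨j.val / 2, by omega⟩).1 :=
          hord _ _ hlt2
        have hle1 : g i ≤ (ch ⟨i.val / 2, by omega⟩).2 := by
          by_cases h : i.val % 2 = 0
          · simp only [hg, if_pos h]; exact le_of_lt (hpair _)
          · simp only [hg, if_neg h]
            exact le_refl _
        have hle2 : (ch ⟨j.val / 2, by omega⟩).1 ≤ g j := by
          by_cases h : j.val % 2 = 0
          · simp only [hg, if_pos h]
            exact le_refl _
          · simp only [hg, if_neg h]; exact le_of_lt (hpair _)
        exact lt_of_le_of_lt hle1 (lt_of_lt_of_le hmid hle2)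
    have hkey : ∀ a b : Fin (2 * (k' + 1)), H'.Adj a b →
        F'.Adj (g a) (g b) ∧ χ s(g a, g b) = false := by
      intro a b hadj
      obtain ⟨hne, hdiv⟩ := (hH' a b).mp hadj
      have hnev : a.val ≠ b.val := fun h => hne (Fin.ext h)
      have hfa : (⟨a.val / 2, by omega⟩ : Fin (k' + 1)) = ⟨b.val / 2, by omega⟩ :=
        Fin.ext hdiv
      by_cases h : a.val % 2 = 0
      · have hb1 : ¬ (b.val % 2 = 0) := by omega
        simp only [hg, if_pos h, if_neg hb1, ← hfa]
        exact ⟨hch2 _, hch3 _⟩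
      · have hb0 : b.val % 2 = 0 := by omega
        simp only [hg, if_neg h, if_pos hb0, ← hfa]
        refine ⟨(hch2 _).symm, ?_⟩
        rw [Sym2.eq_swap]
        exact hch3 _
    exact ⟨g, ⟨hmono, fun a b hadj => (hkey a b hadj).1⟩,
      fun a b hadj => (hkey a b hadj).2⟩
  · -- red copy avoiding the piercing points
    left
    set P : Fin k' → ℕ := fun j =>
      if h : p' j < U.card then ((ι ⟨p' j, h⟩ : U) : Fin n).val else n with hP
    obtain ⟨f, h1, h2, h3, h4⟩ := hR P
    have hmemU : ∀ i, f i ∈ U := fun i => (h1 i (Nat.zero_le _)).2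
    set f' : Fin m → Fin U.card := fun i => ι.symm ⟨f i, hmemU i⟩ with hf'
    have hback : ∀ i, ((ι (f' i) : U) : Fin n) = f i := by
      intro i
      simp only [hf', OrderIso.apply_symm_apply]
    have hmono' : StrictMono f' := by
      intro i j hij
      have : f i < f j := h2 i j (Nat.zero_le _) (Nat.zero_le _) hij
      have hsub : (⟨f i, hmemU i⟩ : U) < ⟨f j, hmemU j⟩ := by
        exact Subtype.mk_lt_mk.mpr this
      exact ι.symm.lt_iff_lt.mpr hsub
    have hadj' : ∀ a b, H.Adj a b → F'.Adj (f' a) (f' b) := by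
      intro a b hadj
      show F.Adj ((ι (f' a) : U) : Fin n) ((ι (f' b) : U) : Fin n)
      rw [hback, hback]
      exact h3 a b hadj (Nat.zero_le _) (Nat.zero_le _)
    refine ⟨f', ⟨hmono', hadj'⟩, ?_⟩
    intro a b hadj
    by_contra hbad
    have hfalse : χ s(f' a, f' b) = false := by
      cases hcc : χ s(f' a, f' b)
      · rfl
      · exact absurd hcc hbad
    -- orient the edge
    have key : ∀ a b : Fin m, H.Adj a b → f' a < f' b → χ s(f' a, f' b) = false → False := by
      intro a b hadj hlt hfalse
      have hmemE : (f' a, f' b) ∈ E := by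
        refine Finset.mem_filter.mpr ⟨Finset.mem_univ _, le_of_lt hlt, ?_, hfalse⟩
        exact hadj' a b hadj
      obtain ⟨j, hj1, hj2⟩ := hp' _ hmemE
      have hpu : p' j < U.card := lt_of_le_of_lt hj2 (f' b).isLt
      have hPj : P j = ((ι ⟨p' j, hpu⟩ : U) : Fin n).val := by
        simp only [hP, dif_pos hpu]
      -- transfer the inequalities along ι
      have hle1 : f' a ≤ (⟨p' j, hpu⟩ : Fin U.card) := by
        rw [Fin.le_def]; exact hj1
      have hle2 : (⟨p' j, hpu⟩ : Fin U.card) ≤ f' b := by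
        rw [Fin.le_def]; exact hj2
      have hι1 : (ι (f' a) : U) ≤ ι ⟨p' j, hpu⟩ := ι.le_iff_le.mpr hle1
      have hι2 : ι ⟨p' j, hpu⟩ ≤ ι (f' b) := ι.le_iff_le.mpr hle2
      have hv1 : ((ι (f' a) : U) : Fin n).val ≤ ((ι ⟨p' j, hpu⟩ : U) : Fin n).val := by
        exact_mod_cast hι1
      have hv2 : ((ι ⟨p' j, hpu⟩ : U) : Fin n).val ≤ ((ι (f' b) : U) : Fin n).val := by
        exact_mod_cast hι2
      rw [hback] at hv1 hv2
      exact h4 a b hadj (Nat.zero_le _) (Nat.zero_le _) j ⟨by omega, by omega⟩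
    rcases Ne.lt_or_gt hadj.ne with hlt | hlt
    · exact key a b hadj (hmono' hlt) hfalse
    · refine key b a hadj.symm (hmono' hlt) ?_
      rw [Sym2.eq_swap]
      exact hfalse

end Stmt11Aux

/-- If `H'` is a monotone matching and `H` is any ordered graph without isolated vertices,
then `(H, H')` is Ramsey finite: minimal ordered Ramsey graphs have boundedly many
vertices (hence there are only finitely many up to order-isomorphism). -/
theorem stmt11 {m k : ℕ} (H : SimpleGraph (Fin m)) (hiso : ∀ v, ∃ w, H.Adj v w)
    (H' : SimpleGraph (Fin (2 * k)))
    (hH' : ∀ a b : Fin (2 * k), H'.Adj a b ↔ (a ≠ b ∧ a.val / 2 = b.val / 2)) :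
    ∃ N : ℕ, ∀ (n : ℕ) (F : SimpleGraph (Fin n)), MinimalOrdRamsey F H H' → n ≤ N := by
  classical
  open Stmt11Aux in
  rcases Nat.eq_zero_or_pos k with hk | hk
  · -- k = 0 : the empty blue matching is always present
    subst hk
    refine ⟨0, fun n F hmin => ?_⟩
    by_contra hn
    have hn' : 0 < n := by omega
    have harr : OrdArrows (⊥ : SimpleGraph (Fin 0)) H H' := by
      intro χ
      right
      refine ⟨fun i => absurd i.isLt (by omega), ⟨?_, ?_⟩, ?_⟩
      · intro a b h
        exact absurd a.isLt (by omega)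
      · intro u v h
        exact absurd u.isLt (by omega)
      · intro u v h
        exact absurd u.isLt (by omega)
    refine hmin.2 0 ⊥ ⟨fun i => i.elim0, ?_, ?_⟩ ?_ harr
    · intro a b h
      exact a.elim0
    · intro u v h
      exact u.elim0
    · rintro ⟨φ, -, -⟩
      exact (φ ⟨0, hn'⟩).elim0
  · obtain ⟨k', rfl⟩ : ∃ k', k = k' + 1 := ⟨k - 1, by omega⟩
    refine ⟨BB m k', fun n F hmin => ?_⟩
    have hR0 : Rr H F Finset.univ k' 0 0 := rr_of_arrows hH' hmin.1
    have hVC : VCut H 0 := by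
      intro u v ha h
      omega
    obtain ⟨U, hUcard, hUR⟩ := build hiso k' 0 0 (Nat.zero_le m) hVC (Nat.zero_le _) hR0
    have hA' := ordArrows_of_Rr hH' hUR
    by_contra hn
    push_neg at hn
    refine hmin.2 U.card _ ⟨fun a => ((U.orderIsoOfFin rfl a : U) : Fin n), ?_, ?_⟩ ?_ hA'
    · intro a b hab
      exact Subtype.coe_lt_coe.mpr ((U.orderIsoOfFin rfl).lt_iff_lt.mpr hab)
    · intro u v h
      exact h
    · rintro ⟨φ, hφ, -⟩
      have hle : n ≤ U.card := by
        have := Fintype.card_le_of_injective φ hφ.injective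
        simpa using this
      omega
end

section
/- Suppose H and H' are χ-unavoidable ordered graphs (for each there exists k such that every ordered graph of chromatic number at least k contains an ordered copy) and no forest is an ordered Ramsey graph of (H,H'). Then, assuming for every k and t there exists a graph of chromatic number at least k and girth at least t, the pair (H,H') is Ramsey infinite. -/
/-- `H` is χ-unavoidable: some `k` exists so that every ordered graph of chromatic number
at least `k` contains an ordered copy of `H`. -/
def ChiUnavoidable {m : ℕ} (H : SimpleGraph (Fin m)) : Prop :=
  ∃ k : ℕ, ∀ (n : ℕ) (G : SimpleGraph (Fin n)),
    (k : ℕ∞) ≤ G.chromaticNumber → ∃ f, OrdCopy H G f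

lemma ordSub_trans {a b c : ℕ} {A : SimpleGraph (Fin a)} {B : SimpleGraph (Fin b)}
    {C : SimpleGraph (Fin c)} (h1 : IsOrdSubgraph A B) (h2 : IsOrdSubgraph B C) :
    IsOrdSubgraph A C := by
  obtain ⟨f, hf, haf⟩ := h1
  obtain ⟨g, hg, hag⟩ := h2
  exact ⟨g ∘ f, hg.comp hf, fun u v h => hag _ _ (haf u v h)⟩

lemma strictMono_fin_id {n : ℕ} {f : Fin n → Fin n} (hf : StrictMono f) : f = id := by
  have hsurj : Function.Surjective f := (Finite.injective_iff_surjective).mp hf.injective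
  have hid : StrictMono (id : Fin n → Fin n) := strictMono_id
  haveI : WellFoundedLT (Fin n) := inferInstance
  have h := StrictMono.range_inj hf hid
  exact h.mp (by rw [Set.range_id]; exact Set.range_eq_univ.mpr hsurj)

lemma exists_minimal {m m' : ℕ} (H : SimpleGraph (Fin m)) (H' : SimpleGraph (Fin m')) :
    ∀ (μ n : ℕ) (F : SimpleGraph (Fin n)), 4 ^ n + F.edgeSet.ncard ≤ μ →
    OrdArrows F H H' →
    ∃ (k : ℕ) (F' : SimpleGraph (Fin k)), MinimalOrdRamsey F' H H' ∧ IsOrdSubgraph F' F := by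
  intro μ
  induction μ with
  | zero => intro n F hle _; exfalso; have := Nat.one_le_two_pow (n := 2*n); 
            have h4 : 1 ≤ 4 ^ n := Nat.one_le_pow _ _ (by norm_num); omega
  | succ μ ih =>
    intro n F hle hF
    by_cases hmin : ∀ (k : ℕ) (F' : SimpleGraph (Fin k)),
        IsOrdSubgraph F' F → ¬ IsOrdSubgraph F F' → ¬ OrdArrows F' H H'
    · exact ⟨n, F, ⟨hF, hmin⟩, ⟨id, strictMono_id, fun _ _ h => h⟩⟩
    · push_neg at hmin
      obtain ⟨k, F', hsub, hnsub, hF'⟩ := hmin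
      have hkn : k ≤ n := by
        obtain ⟨φ, hφ, -⟩ := hsub
        simpa using Fintype.card_le_of_injective φ hφ.injective
      have hdec : 4 ^ k + F'.edgeSet.ncard ≤ μ := by
        rcases lt_or_eq_of_le hkn with hlt | heq
        · have he : F'.edgeSet.ncard ≤ 4 ^ k := by
            have h1 : F'.edgeSet.ncard ≤ Fintype.card (Sym2 (Fin k)) := by
              have := Set.ncard_le_ncard (Set.subset_univ F'.edgeSet) Set.finite_univ
              rwa [Set.ncard_univ, Nat.card_eq_fintype_card] at this
            rw [Sym2.card, Fintype.card_fin] at h1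
            have h2 : (k + 1).choose 2 ≤ (k + 1) * (k + 1) := by
              rw [Nat.choose_two_right]
              exact Nat.div_le_self _ _ |>.trans (Nat.mul_le_mul_left _ (Nat.sub_le _ _))
            have h3 : (k + 1) * (k + 1) ≤ 4 ^ k := by
              have hk2 : k + 1 ≤ 2 ^ k := Nat.lt_two_pow_self (n := k)
              calc (k + 1) * (k + 1) ≤ 2 ^ k * 2 ^ k := Nat.mul_le_mul hk2 hk2
                _ = 4 ^ k := by rw [← Nat.mul_pow]
            omega
          have h4 : 4 ^ (k + 1) ≤ 4 ^ n := Nat.pow_le_pow_right (by norm_num) hlt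
          have h5 : 4 ^ (k + 1) = 4 * 4 ^ k := by ring
          have h6 : 1 ≤ 4 ^ k := Nat.one_le_pow _ _ (by norm_num)
          omega
        · -- k = n
          subst heq
          obtain ⟨φ, hφ, hadj⟩ := hsub
          rw [strictMono_fin_id hφ] at hadj
          have hle' : F' ≤ F := fun {u v} h => hadj u v h
          have hne : F' ≠ F := by
            rintro rfl
            exact hnsub ⟨id, strictMono_id, fun _ _ h => h⟩
          have hcard : F'.edgeSet.ncard < F.edgeSet.ncard := by
            apply Set.ncard_lt_ncard
            · exact SimpleGraph.edgeSet_ssubset_edgeSet.mpr (lt_of_le_of_ne hle' hne)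
            · exact Set.toFinite _
          omega
      obtain ⟨k0, F0, hmin0, hsub0⟩ := ih k F' hdec hF'
      exact ⟨k0, F0, hmin0, ordSub_trans hsub0 hsub⟩

open SimpleGraph in
section


/-- The spanning subgraph of `G` consisting of edges with color `b`. -/
@[reducible]
def colorSub {n : ℕ} (G : SimpleGraph (Fin n)) (c : Sym2 (Fin n) → Bool) (b : Bool) :
    SimpleGraph (Fin n) where
  Adj u v := G.Adj u v ∧ c s(u, v) = b
  symm := by
    refine ⟨?_⟩
    intro u v ⟨h1, h2⟩
    exact ⟨h1.symm, by rwa [Sym2.eq_swap]⟩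
  loopless := ⟨fun v h => G.loopless.irrefl v h.1⟩

lemma prod_colorable {n a b : ℕ} (G : SimpleGraph (Fin n)) (c : Sym2 (Fin n) → Bool)
    (ha : (colorSub G c true).Colorable a) (hb : (colorSub G c false).Colorable b) :
    G.Colorable (a * b) := by
  obtain ⟨Ca⟩ := ha
  obtain ⟨Cb⟩ := hb
  have C : G.Coloring (Fin a × Fin b) :=
    SimpleGraph.Coloring.mk (fun v => (Ca v, Cb v)) (by
      intro u v huv h
      cases hcb : c s(u, v) with
      | true => exact Ca.valid ⟨huv, hcb⟩ (congrArg Prod.fst h)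
      | false => exact Cb.valid ⟨huv, hcb⟩ (congrArg Prod.snd h))
  simpa [Fintype.card_prod] using C.colorable

lemma girth_le_cycle {n : ℕ} {G : SimpleGraph (Fin n)} {v : Fin n} {w : G.Walk v v}
    (hw : w.IsCycle) : G.girth ≤ w.length := by
  have h1 : G.egirth ≤ w.length := (le_egirth.mp le_rfl) v w hw
  have := ENat.toNat_le_toNat h1 (by simp : ((w.length : ℕ∞)) ≠ ⊤)
  simpa [SimpleGraph.girth] using this

lemma cycle_length_le {n : ℕ} {G : SimpleGraph (Fin n)} {v : Fin n} {w : G.Walk v v}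
    (hw : w.IsCycle) : w.length ≤ n := by
  have hnd : w.support.tail.Nodup := ((SimpleGraph.Walk.isCycle_def w).mp hw).2.2
  have h1 := hnd.length_le_card
  have h2 : w.support.length = w.length + 1 := SimpleGraph.Walk.length_support w
  have h3 : w.support.tail.length = w.support.length - 1 := List.length_tail
  simp only [Fintype.card_fin] at h1
  omega
end

/-- If `H` and `H'` are χ-unavoidable ordered graphs, no forest is an ordered Ramsey graph
of `(H, H')`, and (Erdős) for all `k, t` there is a graph of chromatic number ≥ `k` and
girth ≥ `t`, then `(H, H')` is Ramsey infinite. -/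
theorem stmt15 {m m' : ℕ} (H : SimpleGraph (Fin m)) (H' : SimpleGraph (Fin m'))
    (hH : ChiUnavoidable H) (hH' : ChiUnavoidable H')
    (hnoforest : ∀ (n : ℕ) (F : SimpleGraph (Fin n)), F.IsAcyclic → ¬ OrdArrows F H H')
    (herdos : ∀ k t : ℕ, ∃ (n : ℕ) (G : SimpleGraph (Fin n)),
      (k : ℕ∞) ≤ G.chromaticNumber ∧ (t : ℕ∞) ≤ G.girth) :
    ¬ ∃ N : ℕ, ∀ (n : ℕ) (F : SimpleGraph (Fin n)), MinimalOrdRamsey F H H' → n ≤ N := by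
  rintro ⟨N, hN⟩
  obtain ⟨k, hk⟩ := hH
  obtain ⟨k', hk'⟩ := hH'
  obtain ⟨n, G, hχ, hg⟩ := herdos (k * k' + 1) (N + 1)
  have hGarr : OrdArrows G H H' := by
    intro c
    by_cases hr : (k : ℕ∞) ≤ (colorSub G c true).chromaticNumber
    · obtain ⟨f, hf⟩ := hk n _ hr
      exact Or.inl ⟨f, ⟨hf.1, fun u v h => (hf.2 u v h).1⟩,
        fun u v h => (hf.2 u v h).2⟩
    by_cases hb : (k' : ℕ∞) ≤ (colorSub G c false).chromaticNumber
    · obtain ⟨g, hgc⟩ := hk' n _ hb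
      exact Or.inr ⟨g, ⟨hgc.1, fun u v h => (hgc.2 u v h).1⟩,
        fun u v h => (hgc.2 u v h).2⟩
    exfalso
    push_neg at hr hb
    have hrne : (colorSub G c true).chromaticNumber ≠ ⊤ := ne_top_of_lt hr
    have hbne : (colorSub G c false).chromaticNumber ≠ ⊤ := ne_top_of_lt hb
    have hr' := SimpleGraph.colorable_of_chromaticNumber_ne_top hrne
    have hb' := SimpleGraph.colorable_of_chromaticNumber_ne_top hbne
    set mr := (colorSub G c true).chromaticNumber.toNat with hmrdef
    set mb := (colorSub G c false).chromaticNumber.toNat with hmbdef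
    have hmr : mr < k := by
      have hco := ENat.coe_toNat hrne
      rw [← hco] at hr
      exact_mod_cast hr
    have hmb : mb < k' := by
      have hco := ENat.coe_toNat hbne
      rw [← hco] at hb
      exact_mod_cast hb
    have hcol := prod_colorable G c hr' hb'
    have h1 : G.chromaticNumber ≤ ((mr * mb : ℕ) : ℕ∞) := hcol.chromaticNumber_le
    have h2 : ((k * k' + 1 : ℕ) : ℕ∞) ≤ ((mr * mb : ℕ) : ℕ∞) := le_trans hχ h1
    rw [Nat.cast_le] at h2
    have h3 : mr * mb ≤ k * k' := Nat.mul_le_mul hmr.le hmb.le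
    omega
  obtain ⟨k0, F0, hmin0, hsub0⟩ :=
    exists_minimal H H' (4 ^ n + G.edgeSet.ncard) n G le_rfl hGarr
  have hk0 : k0 ≤ N := hN k0 F0 hmin0
  obtain ⟨φ, hφ, hadj⟩ := hsub0
  have hNg : (N + 1 : ℕ) ≤ G.girth := by exact_mod_cast hg
  have hacyc : F0.IsAcyclic := by
    intro v w hw
    let hom : F0 →g G := ⟨φ, fun {u v} h => hadj u v h⟩
    have hinj : Function.Injective hom := fun a b h => hφ.injective h
    have hc : (w.map hom).IsCycle := hw.map hinj
    have h1 : G.girth ≤ (w.map hom).length := girth_le_cycle hc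
    rw [SimpleGraph.Walk.length_map] at h1
    have h2 := cycle_length_le hw
    omega
  exact hnoforest k0 F0 hacyc hmin0.1
end
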